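/- arXiv:2506.11357 — 5 statements merged into one kernel-verified Lean document; each statement's English description precedes it below -/
import Mathlib

section
/- Let w, w' : ℝ → ℝ^p be differentiable curves with w(0) = w'(0), and suppose for all t ≥ 0, d/dt ‖w(t) − w'(t)‖² ≤ (4L/n)‖w(t) − w'(t)‖ + 2β‖w(t) − w'(t)‖² for constants L, β > 0 and n ≥ 1. Then for all t ≥ 0, ‖w(t) − w'(t)‖ ≤ (2L/(βn))(e^{βt} − 1). -/
set_option maxHeartbeats 1000000



private lemma stmt_1_aux (L β n C ε γ ε' a E : ℝ)
    (hγ : γ = β + ε) (hε0 : 0 < ε) (ha : 0 < a)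
    (hβC : β * C = 2 * L / n) (hγε' : γ * ε' = ε * C)
    (hexp : C * γ * E = γ * (a - ε') + γ * C) :
    4 * L / n * a + 2 * β * a ^ 2 < 2 * a * (C * (γ * E)) := by
  have h2 : C * γ * E * a = (γ * (a - ε') + γ * C) * a := by rw [hexp]
  have h3 : γ * ε' * a = ε * C * a := by rw [hγε']
  have h5 : 4 * L / n * a = 2 * (β * C) * a := by rw [hβC]; ring
  subst hγ
  nlinarith [mul_pos hε0 (mul_pos ha ha)]

/-- Grönwall-type stability bound for gradient flow on non-convex smooth losses:
if `w(0) = w'(0)` and `d/dt ‖w t - w' t‖² ≤ (4L/n)‖w t - w' t‖ + 2β‖w t - w' t‖²`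
for `t ≥ 0`, then `‖w t - w' t‖ ≤ (2L/(βn))(e^{βt} − 1)`. -/
theorem stmt_1 {p : ℕ} (w w' : ℝ → EuclideanSpace ℝ (Fin p))
    (hw : Differentiable ℝ w) (hw' : Differentiable ℝ w')
    (h0 : w 0 = w' 0) (L β n : ℝ) (hL : 0 < L) (hβ : 0 < β) (hn : 1 ≤ n)
    (hderiv : ∀ t ≥ (0 : ℝ),
      deriv (fun s => ‖w s - w' s‖ ^ 2) t ≤
        4 * L / n * ‖w t - w' t‖ + 2 * β * ‖w t - w' t‖ ^ 2) :
    ∀ t ≥ (0 : ℝ), ‖w t - w' t‖ ≤ 2 * L / (β * n) * (Real.exp (β * t) - 1) := by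
  intro t ht
  set C : ℝ := 2 * L / (β * n) with hC
  have hn0 : (0:ℝ) < n := lt_of_lt_of_le one_pos hn
  have hC0 : 0 < C := by positivity
  have hβC : β * C = 2 * L / n := by rw [hC]; field_simp
  -- differentiability of f = ‖w - w'‖²
  set f : ℝ → ℝ := fun s => ‖w s - w' s‖ ^ 2 with hf
  have hdiff : Differentiable ℝ f := by
    have h1 : Differentiable ℝ (fun s => w s - w' s) := hw.sub hw'
    exact ((contDiff_norm_sq ℝ (n := 1)).differentiable one_ne_zero).comp h1
  -- key estimate for each ε > 0
  have key : ∀ ε ∈ Set.Ioi (0:ℝ),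
      ‖w t - w' t‖ ≤ C * (Real.exp ((β + ε) * t) - 1) + ε * C / (β + ε) := by
    intro ε hε
    have hε0 : 0 < ε := hε
    set γ : ℝ := β + ε with hγ
    have hγ0 : 0 < γ := by positivity
    set ε' : ℝ := ε * C / γ with hε'
    have hε'0 : 0 < ε' := by positivity
    set A : ℝ → ℝ := fun s => C * (Real.exp (γ * s) - 1) + ε' with hA
    have hApos : ∀ s, 0 ≤ s → 0 < A s := by
      intro s hs
      have : (1:ℝ) ≤ Real.exp (γ * s) := Real.one_le_exp (by positivity)
      have : 0 ≤ C * (Real.exp (γ * s) - 1) := by nlinarith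
      simp only [hA]; linarith
    have hAderiv : ∀ s : ℝ, HasDerivAt A (C * (γ * Real.exp (γ * s))) s := by
      intro s
      have h1 : HasDerivAt (fun s : ℝ => Real.exp (γ * s)) (Real.exp (γ * s) * γ) s :=
        (Real.hasDerivAt_exp (γ * s)).comp s (by simpa using (hasDerivAt_id s).const_mul γ)
      have h2 := ((h1.sub_const 1).const_mul C).add_const ε'
      exact h2.congr_deriv (by ring)
    set B : ℝ → ℝ := fun s => A s ^ 2 with hB
    have hBderiv : ∀ s : ℝ, HasDerivAt B (2 * A s * (C * (γ * Real.exp (γ * s)))) s := by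
      intro s
      have := (hAderiv s).pow 2
      exact this.congr_deriv (by ring)
    -- apply the fencing theorem on [0, t]
    have main : ∀ ⦃x⦄, x ∈ Set.Icc (0:ℝ) t → f x ≤ B x := by
      apply image_le_of_deriv_right_lt_deriv_boundary
        (hdiff.continuous.continuousOn)
        (fun x _ => (hdiff x).hasDerivAt.hasDerivWithinAt)
        _ hBderiv
      · -- contact bound
        intro x hx hcontact
        have hx0 : 0 ≤ x := hx.1
        have hAx : 0 < A x := hApos x hx0
        have hnorm : ‖w x - w' x‖ = A x := by
          have h1 : ‖w x - w' x‖ ^ 2 = A x ^ 2 := hcontact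
          calc ‖w x - w' x‖ = Real.sqrt (‖w x - w' x‖ ^ 2) :=
                (Real.sqrt_sq (norm_nonneg _)).symm
            _ = Real.sqrt (A x ^ 2) := by rw [h1]
            _ = A x := Real.sqrt_sq hAx.le
        have hd := hderiv x hx0
        rw [hnorm] at hd
        refine lt_of_le_of_lt hd ?_
        have hexp : C * γ * Real.exp (γ * x) = γ * (A x - ε') + γ * C := by
          simp only [hA]; ring
        have hγε' : γ * ε' = ε * C := by rw [hε']; field_simp
        exact stmt_1_aux L β n C ε γ ε' (A x) (Real.exp (γ * x)) hγ hε0 hAx hβC hγε' hexp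
      · -- initial condition
        have : f 0 = 0 := by simp [hf, h0]
        rw [this]
        positivity
    have hft : f t ≤ B t := main ⟨le_refl 0 |>.trans ht, le_refl t⟩
    have hAt : 0 ≤ A t := (hApos t ht).le
    have := Real.sqrt_le_sqrt hft
    rwa [hf, Real.sqrt_sq (norm_nonneg _), hB, Real.sqrt_sq hAt] at this
  -- take the limit ε → 0⁺
  have hlim : Filter.Tendsto (fun ε => C * (Real.exp ((β + ε) * t) - 1) + ε * C / (β + ε))
      (nhdsWithin 0 (Set.Ioi 0)) (nhds (C * (Real.exp (β * t) - 1))) := by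
    have hc : ContinuousAt (fun ε => C * (Real.exp ((β + ε) * t) - 1) + ε * C / (β + ε)) 0 := by
      have hne : β + (0:ℝ) ≠ 0 := by simpa using hβ.ne'
      fun_prop (disch := assumption)
    have hval : C * (Real.exp ((β + 0) * t) - 1) + 0 * C / (β + 0)
        = C * (Real.exp (β * t) - 1) := by simp
    have := hc.continuousWithinAt (s := Set.Ioi (0:ℝ))
    rw [ContinuousWithinAt] at this
    rwa [hval] at this
  exact ge_of_tendsto hlim (Filter.eventually_of_mem self_mem_nhdsWithin key)
end

section
/- Let w : [0,T] → ℝ^p solve gradient flow dw/dt = −(1/n)Σᵢ ∇_w ℓ(w(t), z_i) with ℓ differentiable in w. Then for every z ∈ 𝒵, ℓ(w(T), z) = ℓ(w(0), z) − (1/n)Σ_{i=1}^n K_T(z, z_i; S), where K_T(z, z'; S) = ∫₀^T ⟨∇_w ℓ(w(t), z), ∇_w ℓ(w(t), z')⟩ dt. -/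
/-- Equivalence of the gradient-flow loss with a kernel machine built from the
loss path kernel: if `w` solves `dw/dt = −(1/n) Σᵢ ∇_w ℓ(w(t), zᵢ)`, then for every `z`,
`ℓ(w T, z) = ℓ(w 0, z) − (1/n) Σᵢ ∫₀ᵀ ⟨∇_w ℓ(w t, z), ∇_w ℓ(w t, zᵢ)⟩ dt`. -/
theorem stmt_7 {p : ℕ} {Z : Type*} (n : ℕ) (hn : 0 < n) (zs : Fin n → Z)
    (ℓ : EuclideanSpace ℝ (Fin p) → Z → ℝ)
    (w : ℝ → EuclideanSpace ℝ (Fin p))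
    (G : ℝ → Z → EuclideanSpace ℝ (Fin p))
    (hG : ∀ (z : Z) (t : ℝ), HasGradientAt (fun v => ℓ v z) (G t z) (w t))
    (hGcont : ∀ z : Z, Continuous fun t => G t z)
    (hflow : ∀ t : ℝ, HasDerivAt w (-((n : ℝ)⁻¹ • ∑ i, G t (zs i))) t)
    (T : ℝ) (hT : 0 ≤ T) :
    ∀ z : Z, ℓ (w T) z =
      ℓ (w 0) z - (1 / n) * ∑ i, ∫ t in (0:ℝ)..T, (inner ℝ (G t z) (G t (zs i)) : ℝ) := by
  intro z
  set f : ℝ → ℝ := fun t => ℓ (w t) z with hf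
  have hderiv : ∀ t : ℝ, HasDerivAt f
      (-(((n : ℝ)⁻¹) * ∑ i, (inner ℝ (G t z) (G t (zs i)) : ℝ))) t := by
    intro t
    have h1 : HasFDerivAt (fun v => ℓ v z)
        ((InnerProductSpace.toDual ℝ _ (G t z) : EuclideanSpace ℝ (Fin p) →L[ℝ] ℝ)) (w t) :=
      (hG z t).hasFDerivAt
    have h2 := h1.comp_hasDerivAt t (hflow t)
    convert h2 using 1
    · rfl
    · rfl
    · rfl
    simp [InnerProductSpace.toDual_apply_apply, inner_smul_right, inner_sum, inner_neg_right, mul_comm]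
  have hcont : Continuous fun t => -(((n : ℝ)⁻¹) * ∑ i, (inner ℝ (G t z) (G t (zs i)) : ℝ)) := by
    refine (continuous_const.mul ?_).neg
    exact continuous_finset_sum _ fun i _ =>
      ((hGcont z).inner (hGcont (zs i)))
  have key : (∫ t in (0:ℝ)..T,
      (-(((n : ℝ)⁻¹) * ∑ i, (inner ℝ (G t z) (G t (zs i)) : ℝ)))) = f T - f 0 :=
    intervalIntegral.integral_eq_sub_of_hasDerivAt (fun t _ => hderiv t)
      (hcont.intervalIntegrable 0 T)
  have hii : ∀ i : Fin n, IntervalIntegrable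
      (fun t => (inner ℝ (G t z) (G t (zs i)) : ℝ)) MeasureTheory.volume 0 T := fun i =>
    ((hGcont z).inner (hGcont (zs i))).intervalIntegrable 0 T
  have hsum : (∫ t in (0:ℝ)..T,
      (-(((n : ℝ)⁻¹) * ∑ i, (inner ℝ (G t z) (G t (zs i)) : ℝ))))
      = -((n : ℝ)⁻¹ * ∑ i, ∫ t in (0:ℝ)..T, (inner ℝ (G t z) (G t (zs i)) : ℝ)) := by
    rw [intervalIntegral.integral_neg, intervalIntegral.integral_const_mul,
      intervalIntegral.integral_finset_sum (fun i _ => hii i)]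
  rw [hsum] at key
  have : f T = f 0 - (n : ℝ)⁻¹ * ∑ i, ∫ t in (0:ℝ)..T, (inner ℝ (G t z) (G t (zs i)) : ℝ) := by
    linarith
  simpa [one_div] using this
end

section
/- Let K be a symmetric positive-semidefinite kernel on 𝒳 with feature map Φ into Hilbert space H, and let ℱ = {x ↦ ⟨β, Φ(x)⟩ : ‖β‖ ≤ B}. Then the empirical Rademacher complexity satisfies the lower bound R̂(ℱ) ≥ (B/(√2 n))·sqrt(Σ_{i=1}^n K(x_i, x_i)). -/
open Finset

noncomputable def rsign (b : Bool) : ℝ := if b then 1 else -1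

noncomputable def rchi {n : ℕ} (S : Finset (Fin n)) (σ : Fin n → Bool) : ℝ :=
  ∏ i, if i ∈ S then rsign (σ i) else 1

lemma rsign_mul_self (b : Bool) : rsign b * rsign b = 1 := by cases b <;> simp [rsign]

lemma rsign_not (b : Bool) : rsign (!b) = - rsign b := by cases b <;> simp [rsign]

lemma sum_powerset_prod {n : ℕ} (a : Fin n → ℝ) :
    ∑ S : Finset (Fin n), ∏ i, (if i ∈ S then a i else 1) = ∏ i, (a i + 1) := by
  have h := Finset.prod_add a (fun _ => (1:ℝ)) Finset.univ
  simp only [Finset.prod_const_one, mul_one, Finset.powerset_univ] at h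
  rw [h]
  apply Finset.sum_congr rfl
  intro S _
  rw [Finset.prod_ite_mem, Finset.univ_inter]

lemma prod_ite_all {n : ℕ} (P : Fin n → Prop) [DecidablePred P] :
    (∏ i, if P i then (2:ℝ) else 0) = if (∀ i, P i) then 2^n else 0 := by
  by_cases h : ∀ i, P i
  · rw [if_pos h, Finset.prod_congr rfl (fun i _ => if_pos (h i))]
    simp [Finset.prod_const]
  · rw [if_neg h]
    push_neg at h
    obtain ⟨i, hi⟩ := h
    exact Finset.prod_eq_zero (Finset.mem_univ i) (if_neg hi)

lemma rchi_mul {n : ℕ} (S : Finset (Fin n)) (σ τ : Fin n → Bool) :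
    rchi S σ * rchi S τ = ∏ i, (if i ∈ S then rsign (σ i) * rsign (τ i) else 1) := by
  rw [rchi, rchi, ← Finset.prod_mul_distrib]
  apply Finset.prod_congr rfl
  intro i _
  by_cases h : i ∈ S <;> simp [h]

lemma sum_rchi_mul {n : ℕ} (σ τ : Fin n → Bool) :
    ∑ S : Finset (Fin n), rchi S σ * rchi S τ = if σ = τ then (2:ℝ)^n else 0 := by
  calc ∑ S : Finset (Fin n), rchi S σ * rchi S τ
      = ∑ S : Finset (Fin n), ∏ i, (if i ∈ S then rsign (σ i) * rsign (τ i) else 1) := by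
        exact Finset.sum_congr rfl fun S _ => rchi_mul S σ τ
    _ = ∏ i, (rsign (σ i) * rsign (τ i) + 1) := sum_powerset_prod _
    _ = ∏ i, (if σ i = τ i then (2:ℝ) else 0) := by
        apply Finset.prod_congr rfl; intro i _
        rcases Bool.eq_false_or_eq_true (σ i) with h | h <;>
          rcases Bool.eq_false_or_eq_true (τ i) with h' | h' <;>
          simp [h, h', rsign] <;> norm_num
    _ = if (∀ i, σ i = τ i) then (2:ℝ)^n else 0 := prod_ite_all _
    _ = if σ = τ then (2:ℝ)^n else 0 := by
        congr 1
        simp [funext_iff]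

lemma sign_factor {n : ℕ} (i0 : Fin n) (S : Finset (Fin n)) :
    (if i0 ∈ S then (-1:ℝ) else 1) = ∏ j, (if j ∈ S then (if j = i0 then (-1:ℝ) else 1) else 1) := by
  have : ∀ j : Fin n, (if j ∈ S then (if j = i0 then (-1:ℝ) else 1) else 1)
      = (if j = i0 then (if i0 ∈ S then (-1:ℝ) else 1) else 1) := by
    intro j
    by_cases hj : j = i0
    · subst hj; by_cases hS : j ∈ S <;> simp [hS]
    · by_cases hS : j ∈ S <;> simp [hS, hj]
  rw [Finset.prod_congr rfl (fun j _ => this j), Finset.prod_ite_eq' Finset.univ i0]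
  simp

lemma sum_rchi_mul_flip {n : ℕ} (i0 : Fin n) (σ τ : Fin n → Bool) :
    ∑ S : Finset (Fin n), (if i0 ∈ S then (-1:ℝ) else 1) * (rchi S σ * rchi S τ)
      = if τ = Function.update σ i0 (!(σ i0)) then (2:ℝ)^n else 0 := by
  have key : ∀ S : Finset (Fin n), (if i0 ∈ S then (-1:ℝ) else 1) * (rchi S σ * rchi S τ)
      = ∏ j, (if j ∈ S then (if j = i0 then (-1:ℝ) else 1) * (rsign (σ j) * rsign (τ j)) else 1) := by
    intro S
    rw [rchi_mul, sign_factor i0 S, ← Finset.prod_mul_distrib]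
    apply Finset.prod_congr rfl
    intro j _
    by_cases h : j ∈ S <;> simp [h]
  calc ∑ S : Finset (Fin n), (if i0 ∈ S then (-1:ℝ) else 1) * (rchi S σ * rchi S τ)
      = ∑ S : Finset (Fin n),
          ∏ j, (if j ∈ S then (if j = i0 then (-1:ℝ) else 1) * (rsign (σ j) * rsign (τ j)) else 1) :=
        Finset.sum_congr rfl fun S _ => key S
    _ = ∏ j, ((if j = i0 then (-1:ℝ) else 1) * (rsign (σ j) * rsign (τ j)) + 1) :=
        sum_powerset_prod _
    _ = ∏ j, (if ((σ j = τ j) ↔ ¬ (j = i0)) then (2:ℝ) else 0) := by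
        apply Finset.prod_congr rfl; intro j _
        by_cases hj : j = i0
        · subst hj
          rcases Bool.eq_false_or_eq_true (σ j) with h | h <;>
            rcases Bool.eq_false_or_eq_true (τ j) with h' | h' <;>
            simp [h, h', rsign] <;> norm_num
        · rcases Bool.eq_false_or_eq_true (σ j) with h | h <;>
            rcases Bool.eq_false_or_eq_true (τ j) with h' | h' <;>
            simp [hj, h, h', rsign] <;> norm_num
    _ = if (∀ j, ((σ j = τ j) ↔ ¬ (j = i0))) then (2:ℝ)^n else 0 := prod_ite_all _
    _ = if τ = Function.update σ i0 (!(σ i0)) then (2:ℝ)^n else 0 := by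
        congr 1
        apply propext
        constructor
        · intro h
          funext j
          rw [Function.update_apply]
          by_cases hj : j = i0
          · rw [if_pos hj, hj]
            have h2 : ¬ (σ i0 = τ i0) := by simpa using h i0
            revert h2
            rcases Bool.eq_false_or_eq_true (σ i0) with h0 | h0 <;>
              rcases Bool.eq_false_or_eq_true (τ i0) with h1 | h1 <;> simp [h0, h1]
          · rw [if_neg hj]
            exact ((h j).mpr hj).symm
        · intro h j
          subst h
          rw [Function.update_apply]
          by_cases hj : j = i0
          · simp only [hj, if_pos rfl, not_true, iff_false]
            rcases Bool.eq_false_or_eq_true (σ i0) with h0 | h0 <;> simp [h0]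
          · simp [hj]

noncomputable def coef {n : ℕ} (f : (Fin n → Bool) → ℝ) (S : Finset (Fin n)) : ℝ :=
  ∑ σ : Fin n → Bool, f σ * rchi S σ

lemma parseval {n : ℕ} (f : (Fin n → Bool) → ℝ) :
    ∑ S : Finset (Fin n), (coef f S)^2 = 2^n * ∑ σ : Fin n → Bool, (f σ)^2 := by
  have h1 : ∀ S : Finset (Fin n), (coef f S)^2
      = ∑ σ : Fin n → Bool, ∑ τ : Fin n → Bool, (f σ * f τ) * (rchi S σ * rchi S τ) := by
    intro S
    rw [sq, coef, Finset.sum_mul_sum]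
    exact Finset.sum_congr rfl fun σ _ => Finset.sum_congr rfl fun τ _ => by ring
  calc ∑ S : Finset (Fin n), (coef f S)^2
      = ∑ S : Finset (Fin n), ∑ σ : Fin n → Bool, ∑ τ : Fin n → Bool,
          (f σ * f τ) * (rchi S σ * rchi S τ) := Finset.sum_congr rfl fun S _ => h1 S
    _ = ∑ σ : Fin n → Bool, ∑ τ : Fin n → Bool, ∑ S : Finset (Fin n),
          (f σ * f τ) * (rchi S σ * rchi S τ) := by
        rw [Finset.sum_comm]
        exact Finset.sum_congr rfl fun σ _ => Finset.sum_comm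
    _ = ∑ σ : Fin n → Bool, ∑ τ : Fin n → Bool,
          (f σ * f τ) * (if σ = τ then (2:ℝ)^n else 0) := by
        refine Finset.sum_congr rfl fun σ _ => Finset.sum_congr rfl fun τ _ => ?_
        rw [← Finset.mul_sum, sum_rchi_mul]
    _ = ∑ σ : Fin n → Bool, (f σ * f σ) * (2:ℝ)^n := by
        refine Finset.sum_congr rfl fun σ _ => ?_
        simp [mul_ite, mul_zero, Finset.sum_ite_eq]
    _ = 2^n * ∑ σ : Fin n → Bool, (f σ)^2 := by
        rw [Finset.mul_sum]
        exact Finset.sum_congr rfl fun σ _ => by ring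

lemma flip_sum {n : ℕ} (f : (Fin n → Bool) → ℝ) (i0 : Fin n) :
    (2:ℝ)^n * ∑ σ : Fin n → Bool, f σ * f (Function.update σ i0 (!(σ i0)))
      = ∑ S : Finset (Fin n), (if i0 ∈ S then (-1:ℝ) else 1) * (coef f S)^2 := by
  have h1 : ∀ S : Finset (Fin n), (if i0 ∈ S then (-1:ℝ) else 1) * (coef f S)^2
      = ∑ σ : Fin n → Bool, ∑ τ : Fin n → Bool,
          (f σ * f τ) * ((if i0 ∈ S then (-1:ℝ) else 1) * (rchi S σ * rchi S τ)) := by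
    intro S
    rw [sq, coef, Finset.sum_mul_sum, Finset.mul_sum]
    refine Finset.sum_congr rfl fun σ _ => ?_
    rw [Finset.mul_sum]
    exact Finset.sum_congr rfl fun τ _ => by ring
  symm
  calc ∑ S : Finset (Fin n), (if i0 ∈ S then (-1:ℝ) else 1) * (coef f S)^2
      = ∑ S : Finset (Fin n), ∑ σ : Fin n → Bool, ∑ τ : Fin n → Bool,
          (f σ * f τ) * ((if i0 ∈ S then (-1:ℝ) else 1) * (rchi S σ * rchi S τ)) :=
        Finset.sum_congr rfl fun S _ => h1 S
    _ = ∑ σ : Fin n → Bool, ∑ τ : Fin n → Bool, ∑ S : Finset (Fin n),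
          (f σ * f τ) * ((if i0 ∈ S then (-1:ℝ) else 1) * (rchi S σ * rchi S τ)) := by
        rw [Finset.sum_comm]
        exact Finset.sum_congr rfl fun σ _ => Finset.sum_comm
    _ = ∑ σ : Fin n → Bool, ∑ τ : Fin n → Bool,
          (f σ * f τ) * (if τ = Function.update σ i0 (!(σ i0)) then (2:ℝ)^n else 0) := by
        refine Finset.sum_congr rfl fun σ _ => Finset.sum_congr rfl fun τ _ => ?_
        rw [← Finset.mul_sum, sum_rchi_mul_flip]
    _ = ∑ σ : Fin n → Bool, (f σ * f (Function.update σ i0 (!(σ i0)))) * (2:ℝ)^n := by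
        refine Finset.sum_congr rfl fun σ _ => ?_
        simp [mul_ite, mul_zero, Finset.sum_ite_eq']
    _ = (2:ℝ)^n * ∑ σ : Fin n → Bool, f σ * f (Function.update σ i0 (!(σ i0))) := by
        rw [Finset.mul_sum]
        exact Finset.sum_congr rfl fun σ _ => by ring

lemma sum_sigma_prod {n : ℕ} (g : Fin n → Bool → ℝ) :
    ∑ σ : Fin n → Bool, ∏ i, g i (σ i) = ∏ i, (g i true + g i false) := by
  have h := Finset.prod_univ_sum (fun _ : Fin n => (Finset.univ : Finset Bool)) g
  rw [Fintype.piFinset_univ] at h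
  rw [← h]
  exact Finset.prod_congr rfl fun i _ => Fintype.sum_bool _

lemma sum_sigma_rchi {n : ℕ} (S : Finset (Fin n)) :
    ∑ σ : Fin n → Bool, rchi S σ = if S = ∅ then (2:ℝ)^n else 0 := by
  have h := sum_sigma_prod (fun i b => if i ∈ S then rsign b else (1:ℝ))
  rw [show (∑ σ : Fin n → Bool, ∏ i, (if i ∈ S then rsign (σ i) else (1:ℝ)))
      = ∑ σ : Fin n → Bool, rchi S σ from rfl] at h
  rw [h]
  have h2 : ∀ i : Fin n, ((if i ∈ S then rsign true else (1:ℝ)) + (if i ∈ S then rsign false else 1))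
      = if i ∈ S then 0 else 2 := by
    intro i; by_cases hi : i ∈ S <;> simp [hi, rsign] <;> norm_num
  rw [Finset.prod_congr rfl fun i _ => h2 i]
  by_cases hS : S = ∅
  · subst hS; simp [Finset.prod_const]
  · rw [if_neg hS]
    obtain ⟨i, hi⟩ := Finset.nonempty_iff_ne_empty.mpr hS
    exact Finset.prod_eq_zero (Finset.mem_univ i) (if_pos hi)

lemma rchi_singleton {n : ℕ} (j : Fin n) (σ : Fin n → Bool) : rchi {j} σ = rsign (σ j) := by
  rw [rchi, Finset.prod_ite_mem, Finset.univ_inter, Finset.prod_singleton]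

lemma rchi_pair {n : ℕ} {i j : Fin n} (hij : i ≠ j) (σ : Fin n → Bool) :
    rchi {i, j} σ = rsign (σ i) * rsign (σ j) := by
  rw [rchi, Finset.prod_ite_mem, Finset.univ_inter, Finset.prod_pair hij]

lemma sum_sigma_rsign_pair {n : ℕ} (i j : Fin n) :
    ∑ σ : Fin n → Bool, rsign (σ i) * rsign (σ j) = if i = j then (2:ℝ)^n else 0 := by
  by_cases hij : i = j
  · subst hij
    rw [if_pos rfl, Finset.sum_congr rfl fun σ _ => rsign_mul_self (σ i)]
    simp [Finset.card_univ]
  · rw [if_neg hij, Finset.sum_congr rfl fun σ _ => (rchi_pair hij σ).symm, sum_sigma_rchi]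
    rw [if_neg]
    intro h
    have : i ∈ ({i, j} : Finset (Fin n)) := by simp
    rw [h] at this
    exact absurd this (Finset.notMem_empty i)

theorem kk_core {H : Type*} [NormedAddCommGroup H] [InnerProductSpace ℝ H] {n : ℕ}
    (v : Fin n → H) :
    (2:ℝ)^n * Real.sqrt ((∑ i, ‖v i‖^2) / 2) ≤ ∑ σ : Fin n → Bool, ‖∑ i, rsign (σ i) • v i‖ := by
  classical
  set Sv : (Fin n → Bool) → H := fun σ => ∑ i, rsign (σ i) • v i with hSv
  set f : (Fin n → Bool) → ℝ := fun σ => ‖Sv σ‖ with hf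
  set T : ℝ := ∑ i, ‖v i‖^2 with hT
  set F : ℝ := ∑ σ : Fin n → Bool, f σ with hF
  set P : ℝ := ∑ σ : Fin n → Bool, (f σ)^2 with hP
  -- evenness
  have hSv_neg : ∀ σ : Fin n → Bool, Sv (fun i => !(σ i)) = - Sv σ := by
    intro σ
    rw [hSv, ← Finset.sum_neg_distrib]
    exact Finset.sum_congr rfl fun i _ => by rw [rsign_not, neg_smul]
  have h_even : ∀ σ : Fin n → Bool, f (fun i => !(σ i)) = f σ := by
    intro σ; rw [hf]; simp only []; rw [hSv_neg, norm_neg]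
  -- singleton coefficients vanish
  have h_single : ∀ j : Fin n, coef f {j} = 0 := by
    intro j
    have hinv : Function.Bijective (fun σ : Fin n → Bool => fun i => !(σ i)) := by
      have : Function.Involutive (fun σ : Fin n → Bool => fun i => !(σ i)) := by
        intro σ; funext i; simp
      exact this.bijective
    have hbij : ∑ σ : Fin n → Bool, f (fun i => !(σ i)) * rchi {j} (fun i => !(σ i))
        = ∑ σ : Fin n → Bool, f σ * rchi {j} σ :=
      Fintype.sum_bijective _ hinv _ _ (fun σ => rfl)
    have : coef f {j} = - coef f {j} := by
      rw [coef]
      conv_lhs => rw [← hbij]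
      rw [← Finset.sum_neg_distrib]
      refine Finset.sum_congr rfl fun σ _ => ?_
      rw [h_even σ, rchi_singleton, rchi_singleton, rsign_not]
      ring
    linarith
  -- second moment identity
  have h_P : P = 2^n * T := by
    have hfsq : ∀ σ : Fin n → Bool, (f σ)^2
        = ∑ i, ∑ j, (rsign (σ i) * rsign (σ j)) * (inner ℝ (v i) (v j) : ℝ) := by
      intro σ
      rw [hf]
      simp only []
      rw [← real_inner_self_eq_norm_sq, hSv, sum_inner]
      refine Finset.sum_congr rfl fun i _ => ?_
      rw [inner_sum]
      refine Finset.sum_congr rfl fun j _ => ?_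
      rw [real_inner_smul_left, real_inner_smul_right]
      ring
    calc P = ∑ σ : Fin n → Bool, ∑ i, ∑ j,
            (rsign (σ i) * rsign (σ j)) * (inner ℝ (v i) (v j) : ℝ) :=
          Finset.sum_congr rfl fun σ _ => hfsq σ
      _ = ∑ i, ∑ j, ∑ σ : Fin n → Bool,
            (rsign (σ i) * rsign (σ j)) * (inner ℝ (v i) (v j) : ℝ) := by
          rw [Finset.sum_comm]
          exact Finset.sum_congr rfl fun i _ => Finset.sum_comm
      _ = ∑ i, ∑ j, (if i = j then (2:ℝ)^n else 0) * (inner ℝ (v i) (v j) : ℝ) := by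
          refine Finset.sum_congr rfl fun i _ => Finset.sum_congr rfl fun j _ => ?_
          rw [← Finset.sum_mul, sum_sigma_rsign_pair]
      _ = 2^n * T := by
          rw [hT, Finset.mul_sum]
          refine Finset.sum_congr rfl fun i _ => ?_
          simp only [ite_mul, zero_mul]
          rw [Finset.sum_ite_eq, if_pos (Finset.mem_univ i), real_inner_self_eq_norm_sq]
  -- pointwise Cauchy-Schwarz bound
  have h_cs : ∀ σ : Fin n → Bool,
      ((n:ℝ) - 2) * (f σ)^2 ≤ ∑ i, f σ * f (Function.update σ i (!(σ i))) := by
    intro σ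
    have hflip : ∀ i : Fin n, Sv (Function.update σ i (!(σ i)))
        = Sv σ - (2 * rsign (σ i)) • v i := by
      intro i
      rw [hSv, eq_sub_iff_add_eq]
      simp only []
      rw [show ((2 : ℝ) * rsign (σ i)) • v i
          = ∑ j, (if j = i then (2 * rsign (σ i)) • v i else 0) by
        rw [Finset.sum_ite_eq', if_pos (Finset.mem_univ i)], ← Finset.sum_add_distrib]
      refine Finset.sum_congr rfl fun j _ => ?_
      by_cases hj : j = i
      · subst hj
        rw [if_pos rfl, Function.update_self, rsign_not, ← add_smul]
        congr 1; ring
      · rw [if_neg hj, Function.update_of_ne hj, add_zero]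
    have hinner : ∀ i : Fin n, (inner ℝ (Sv σ) (Sv (Function.update σ i (!(σ i)))) : ℝ)
        = ‖Sv σ‖^2 - 2 * rsign (σ i) * (inner ℝ (Sv σ) (v i) : ℝ) := by
      intro i
      rw [hflip i, inner_sub_right, real_inner_smul_right, real_inner_self_eq_norm_sq]
    have hsum_inner : ∑ i, (inner ℝ (Sv σ) (Sv (Function.update σ i (!(σ i)))) : ℝ)
        = ((n:ℝ) - 2) * ‖Sv σ‖^2 := by
      rw [Finset.sum_congr rfl fun i _ => hinner i, Finset.sum_sub_distrib, Finset.sum_const,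
        Finset.card_univ, Fintype.card_fin, nsmul_eq_mul]
      have : ∑ i, 2 * rsign (σ i) * (inner ℝ (Sv σ) (v i) : ℝ)
          = 2 * (inner ℝ (Sv σ) (Sv σ) : ℝ) := by
        rw [hSv]
        conv_rhs => rw [inner_sum]
        rw [Finset.mul_sum]
        refine Finset.sum_congr rfl fun i _ => ?_
        rw [real_inner_smul_right]
        ring
      rw [this, real_inner_self_eq_norm_sq]
      ring
    calc ((n:ℝ) - 2) * (f σ)^2
        = ∑ i, (inner ℝ (Sv σ) (Sv (Function.update σ i (!(σ i)))) : ℝ) := by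
          rw [hsum_inner, hf]
      _ ≤ ∑ i, f σ * f (Function.update σ i (!(σ i))) :=
          Finset.sum_le_sum fun i _ => real_inner_le_norm _ _
  -- sum it up
  have h_main : ((n:ℝ) - 2) * ((2:ℝ)^n * P)
      ≤ ∑ S : Finset (Fin n), ((n:ℝ) - 2 * S.card) * (coef f S)^2 := by
    have h1 : ((n:ℝ) - 2) * P ≤ ∑ i : Fin n, ∑ σ : Fin n → Bool,
        f σ * f (Function.update σ i (!(σ i))) := by
      rw [Finset.sum_comm, hP, Finset.mul_sum]
      exact Finset.sum_le_sum fun σ _ => h_cs σ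
    have h2 : ∑ i : Fin n, (2:ℝ)^n * ∑ σ : Fin n → Bool,
        f σ * f (Function.update σ i (!(σ i)))
        = ∑ S : Finset (Fin n), ((n:ℝ) - 2 * S.card) * (coef f S)^2 := by
      rw [Finset.sum_congr rfl fun i _ => flip_sum f i, Finset.sum_comm]
      refine Finset.sum_congr rfl fun S _ => ?_
      rw [← Finset.sum_mul]
      congr 1
      have hpt : ∀ i : Fin n, (if i ∈ S then (-1:ℝ) else 1)
          = 1 - 2 * (if i ∈ S then (1:ℝ) else 0) := by
        intro i; by_cases h : i ∈ S <;> simp [h] <;> norm_num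
      rw [Finset.sum_congr rfl fun i _ => hpt i, Finset.sum_sub_distrib, Finset.sum_const,
        ← Finset.mul_sum, Finset.sum_ite_mem, Finset.univ_inter, Finset.sum_const,
        Finset.card_univ, Fintype.card_fin]
      simp
    calc ((n:ℝ) - 2) * ((2:ℝ)^n * P)
        = (2:ℝ)^n * (((n:ℝ) - 2) * P) := by ring
      _ ≤ (2:ℝ)^n * ∑ i : Fin n, ∑ σ : Fin n → Bool,
            f σ * f (Function.update σ i (!(σ i))) := by
          apply mul_le_mul_of_nonneg_left h1 (by positivity)
      _ = ∑ i : Fin n, (2:ℝ)^n * ∑ σ : Fin n → Bool,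
            f σ * f (Function.update σ i (!(σ i))) := by rw [Finset.mul_sum]
      _ = ∑ S : Finset (Fin n), ((n:ℝ) - 2 * S.card) * (coef f S)^2 := h2
  -- combine with Parseval
  have hD : 0 ≤ ∑ S : Finset (Fin n), ((2:ℝ) - 2*S.card) * (coef f S)^2 := by
    have h5 : ((n:ℝ) - 2) * ((2:ℝ)^n * P)
        = ((n:ℝ) - 2) * ∑ S : Finset (Fin n), (coef f S)^2 := by rw [parseval]
    rw [h5] at h_main
    calc (0:ℝ) ≤ (∑ S : Finset (Fin n), ((n:ℝ) - 2*S.card) * (coef f S)^2)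
          - ((n:ℝ) - 2) * ∑ S : Finset (Fin n), (coef f S)^2 := sub_nonneg.mpr h_main
      _ = ∑ S : Finset (Fin n), ((2:ℝ) - 2*S.card) * (coef f S)^2 := by
          rw [Finset.mul_sum, ← Finset.sum_sub_distrib]
          exact Finset.sum_congr rfl fun S _ => by ring
  have hc0 : coef f ∅ = F := by
    rw [coef, hF]
    refine Finset.sum_congr rfl fun σ _ => ?_
    simp [rchi]
  have hfinal : 2 * ((2:ℝ)^n * P) ≤ 4 * F^2 := by
    calc 2 * ((2:ℝ)^n * P) = 2 * ∑ S : Finset (Fin n), (coef f S)^2 := by rw [parseval]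
      _ ≤ 2 * (∑ S : Finset (Fin n), (coef f S)^2)
          + ∑ S : Finset (Fin n), ((2:ℝ) - 2*S.card) * (coef f S)^2 :=
            le_add_of_nonneg_right hD
      _ = ∑ S : Finset (Fin n), ((4:ℝ) - 2*S.card) * (coef f S)^2 := by
          rw [Finset.mul_sum, ← Finset.sum_add_distrib]
          exact Finset.sum_congr rfl fun S _ => by ring
      _ ≤ ∑ S : Finset (Fin n), (if S = ∅ then (4:ℝ) else 0) * (coef f S)^2 := by
          refine Finset.sum_le_sum fun S _ => ?_
          by_cases hS : S = ∅
          · subst hS; simp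
          · rw [if_neg hS, zero_mul]
            by_cases h1 : S.card = 1
            · obtain ⟨j, hj⟩ := Finset.card_eq_one.mp h1
              subst hj
              rw [h_single j]
              simp
            · have h0 : S.card ≠ 0 := fun hc => hS (Finset.card_eq_zero.mp hc)
              have h2 : 2 ≤ S.card := by omega
              apply mul_nonpos_of_nonpos_of_nonneg
              · have : (2:ℝ) ≤ S.card := by exact_mod_cast h2
                linarith
              · positivity
      _ = 4 * F^2 := by
          simp only [ite_mul, zero_mul]
          rw [Finset.sum_ite_eq', if_pos (Finset.mem_univ _), hc0]
  have hF0 : 0 ≤ F := Finset.sum_nonneg fun σ _ => norm_nonneg _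
  have hT0 : 0 ≤ T := Finset.sum_nonneg fun i _ => sq_nonneg _
  rw [h_P] at hfinal
  calc (2:ℝ)^n * Real.sqrt (T / 2) = Real.sqrt (((2:ℝ)^n)^2 * (T/2)) := by
        rw [Real.sqrt_mul (sq_nonneg _), Real.sqrt_sq (by positivity)]
    _ ≤ Real.sqrt (F^2) := Real.sqrt_le_sqrt (by nlinarith [hfinal])
    _ = F := Real.sqrt_sq hF0




/-- Khintchine–Kahane lower bound for the Rademacher complexity of a norm-bounded
kernel class: with `K(x,y) = ⟨Φ x, Φ y⟩` and `ℱ = {x ↦ ⟨β, Φ x⟩ : ‖β‖ ≤ B}`, the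
empirical Rademacher complexity on `x₁,…,xₙ` is at least `(B/(√2 n))√(Σᵢ K(xᵢ,xᵢ))`. -/
theorem stmt_10 {X : Type*} {H : Type*} [NormedAddCommGroup H] [InnerProductSpace ℝ H]
    (Φ : X → H) (K : X → X → ℝ) (hK : ∀ x y, K x y = (inner ℝ (Φ x) (Φ y) : ℝ))
    (B : ℝ) (hB : 0 ≤ B) (n : ℕ) (hn : 0 < n) (x : Fin n → X)
    (ε : Bool → ℝ) (hε : ε = fun b => if b then 1 else -1) :
    (B / (Real.sqrt 2 * n)) * Real.sqrt (∑ i, K (x i) (x i)) ≤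
      (1 / n) * ((∑ σ : Fin n → Bool,
        sSup {r : ℝ | ∃ β : H, ‖β‖ ≤ B ∧
          r = ∑ i, ε (σ i) * (inner ℝ β (Φ (x i)) : ℝ)}) / 2 ^ n) := by
  classical
  subst hε
  have hT0 : (0:ℝ) ≤ ∑ i, ‖Φ (x i)‖^2 := Finset.sum_nonneg fun i _ => sq_nonneg _
  have hK' : ∑ i, K (x i) (x i) = ∑ i, ‖Φ (x i)‖^2 :=
    Finset.sum_congr rfl fun i _ => by rw [hK, real_inner_self_eq_norm_sq]
  have hr : ∀ (β : H) (σ : Fin n → Bool),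
      (∑ i, (fun b => if b then (1:ℝ) else -1) (σ i) * (inner ℝ β (Φ (x i)) : ℝ))
        = (inner ℝ β (∑ i, rsign (σ i) • Φ (x i)) : ℝ) := by
    intro β σ
    rw [inner_sum]
    exact Finset.sum_congr rfl fun i _ => by rw [real_inner_smul_right, rsign]
  have hsup : ∀ σ : Fin n → Bool, B * ‖∑ i, rsign (σ i) • Φ (x i)‖ ≤
      sSup {r : ℝ | ∃ β : H, ‖β‖ ≤ B ∧
        r = ∑ i, (fun b => if b then (1:ℝ) else -1) (σ i) * (inner ℝ β (Φ (x i)) : ℝ)} := by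
    intro σ
    have hbdd : BddAbove {r : ℝ | ∃ β : H, ‖β‖ ≤ B ∧
        r = ∑ i, (fun b => if b then (1:ℝ) else -1) (σ i) * (inner ℝ β (Φ (x i)) : ℝ)} := by
      refine ⟨B * ‖∑ i, rsign (σ i) • Φ (x i)‖, ?_⟩
      rintro r ⟨β, hβ, rfl⟩
      rw [hr β σ]
      calc (inner ℝ β (∑ i, rsign (σ i) • Φ (x i)) : ℝ)
          ≤ ‖β‖ * ‖∑ i, rsign (σ i) • Φ (x i)‖ := real_inner_le_norm _ _
        _ ≤ B * ‖∑ i, rsign (σ i) • Φ (x i)‖ :=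
            mul_le_mul_of_nonneg_right hβ (norm_nonneg _)
    apply le_csSup hbdd
    by_cases h0 : (∑ i, rsign (σ i) • Φ (x i)) = 0
    · refine ⟨0, by simpa using hB, ?_⟩
      rw [hr 0 σ]
      simp [h0]
    · refine ⟨(B / ‖∑ i, rsign (σ i) • Φ (x i)‖) • (∑ i, rsign (σ i) • Φ (x i)), ?_, ?_⟩
      · rw [norm_smul, Real.norm_eq_abs, abs_div, abs_of_nonneg hB,
          abs_of_nonneg (norm_nonneg _), div_mul_cancel₀]
        exact norm_ne_zero_iff.mpr h0
      · rw [hr _ σ, real_inner_smul_left, real_inner_self_eq_norm_sq]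
        have hne : ‖∑ i, rsign (σ i) • Φ (x i)‖ ≠ 0 := norm_ne_zero_iff.mpr h0
        field_simp
  have hkk : (2:ℝ)^n * Real.sqrt ((∑ i, ‖Φ (x i)‖^2) / 2)
      ≤ ∑ σ : Fin n → Bool, ‖∑ i, rsign (σ i) • Φ (x i)‖ := kk_core _
  have hsum : (2:ℝ)^n * (B * Real.sqrt ((∑ i, ‖Φ (x i)‖^2) / 2))
      ≤ ∑ σ : Fin n → Bool, sSup {r : ℝ | ∃ β : H, ‖β‖ ≤ B ∧
          r = ∑ i, (fun b => if b then (1:ℝ) else -1) (σ i) * (inner ℝ β (Φ (x i)) : ℝ)} := by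
    calc (2:ℝ)^n * (B * Real.sqrt ((∑ i, ‖Φ (x i)‖^2) / 2))
        = B * ((2:ℝ)^n * Real.sqrt ((∑ i, ‖Φ (x i)‖^2) / 2)) := by ring
      _ ≤ B * ∑ σ : Fin n → Bool, ‖∑ i, rsign (σ i) • Φ (x i)‖ :=
          mul_le_mul_of_nonneg_left hkk hB
      _ = ∑ σ : Fin n → Bool, B * ‖∑ i, rsign (σ i) • Φ (x i)‖ := Finset.mul_sum _ _ _
      _ ≤ _ := Finset.sum_le_sum fun σ _ => hsup σ
  set Q : ℝ := ∑ σ : Fin n → Bool, sSup {r : ℝ | ∃ β : H, ‖β‖ ≤ B ∧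
      r = ∑ i, (fun b => if b then (1:ℝ) else -1) (σ i) * (inner ℝ β (Φ (x i)) : ℝ)} with hQ
  rw [hK']
  have hn0 : (0:ℝ) < n := by exact_mod_cast hn
  have h2n : (0:ℝ) < 2^n := by positivity
  have hs2 : (0:ℝ) < Real.sqrt 2 := Real.sqrt_pos.mpr (by norm_num)
  have hsq : Real.sqrt ((∑ i, ‖Φ (x i)‖^2) / 2)
      = Real.sqrt (∑ i, ‖Φ (x i)‖^2) / Real.sqrt 2 := by
    rw [Real.sqrt_div hT0]
  have hrhs : (1 / (n:ℝ)) * (Q / 2^n) = Q / (2^n * n) := by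
    ring
  rw [hrhs]
  rw [div_mul_eq_mul_div, div_le_div_iff₀ (by positivity) (by positivity)]
  -- B * √T * (2^n * n) ≤ Q * (√2 * n)
  have : (2:ℝ)^n * (B * (Real.sqrt (∑ i, ‖Φ (x i)‖^2) / Real.sqrt 2)) ≤ Q := by
    rw [← hsq]; exact hsum
  calc B * Real.sqrt (∑ i, ‖Φ (x i)‖^2) * (2^n * n)
      = ((2:ℝ)^n * (B * (Real.sqrt (∑ i, ‖Φ (x i)‖^2) / Real.sqrt 2))) * (Real.sqrt 2 * n) := by
        field_simp
    _ ≤ Q * (Real.sqrt 2 * n) :=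
        mul_le_mul_of_nonneg_right this (by positivity)
end

section
/- Let w : [0,∞) → ℝ^p solve dw/dt = −(1/n)·∇_w (½‖f(w(t),X) − y‖²) where f(·, X) : ℝ^p → ℝ^n is differentiable, and suppose the NTK Gram matrix Θ̂(w) = ∇_w f(w,X)·∇_w f(w,X)ᵀ ∈ ℝ^{n×n} satisfies λ_min(Θ̂(w(t))) ≥ λ_min > 0 for all t ∈ [0,T]. Then for all t ∈ [0,T], ‖f(w(t),X) − y‖² ≤ e^{−(2λ_min/n)t}·‖f(w(0),X) − y‖². -/
/-- Exponential convergence of gradient flow on mean-square loss under a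
lower-bounded NTK: if `w` solves `dw/dt = −(1/n)·Jᵀ(f(w)−y)` (the gradient flow of
`(1/(2n))‖f(w,X)−y‖²`) and the NTK Gram matrix `J Jᵀ` has smallest eigenvalue at
least `λmin > 0` along the trajectory (equivalently `λmin‖r‖² ≤ ‖Jᵀ r‖²` for the
residual `r`), then `‖f(w t) − y‖² ≤ e^{−(2λmin/n)t}‖f(w 0) − y‖²` on `[0,T]`. -/
theorem stmt_15 {p n : ℕ} (f : EuclideanSpace ℝ (Fin p) → EuclideanSpace ℝ (Fin n))
    (hf : Differentiable ℝ f) (y : EuclideanSpace ℝ (Fin n))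
    (w : ℝ → EuclideanSpace ℝ (Fin p)) (T lmin : ℝ) (hT : 0 ≤ T) (hlmin : 0 < lmin)
    (hn : 0 < n)
    (hflow : ∀ t : ℝ, HasDerivAt w
      (-(((n : ℝ))⁻¹ •
        (ContinuousLinearMap.adjoint (fderiv ℝ f (w t))) (f (w t) - y))) t)
    (hNTK : ∀ t ∈ Set.Icc (0:ℝ) T,
      lmin * ‖f (w t) - y‖ ^ 2 ≤
        ‖(ContinuousLinearMap.adjoint (fderiv ℝ f (w t))) (f (w t) - y)‖ ^ 2) :
    ∀ t ∈ Set.Icc (0:ℝ) T,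
      ‖f (w t) - y‖ ^ 2 ≤ Real.exp (-(2 * lmin / n) * t) * ‖f (w 0) - y‖ ^ 2 := by
  have hnR : (0:ℝ) < n := by exact_mod_cast hn
  set K : ℝ := 2 * lmin / n with hKdef
  have hKpos : 0 < K := by positivity
  -- derivative of the squared residual norm
  have hg : ∀ s : ℝ, HasDerivAt (fun u => ‖f (w u) - y‖ ^ 2)
      (-(2 / n) *
        ‖(ContinuousLinearMap.adjoint (fderiv ℝ f (w s))) (f (w s) - y)‖ ^ 2) s := by
    intro s
    have hF : HasDerivAt (fun u => f (w u) - y)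
        ((fderiv ℝ f (w s)) (-(((n:ℝ))⁻¹ •
          (ContinuousLinearMap.adjoint (fderiv ℝ f (w s))) (f (w s) - y)))) s :=
      ((hf (w s)).hasFDerivAt.comp_hasDerivAt s (hflow s)).sub_const y
    have h1 := hF.inner ℝ hF
    have hval : (inner ℝ (f (w s) - y) ((fderiv ℝ f (w s)) (-(((n:ℝ))⁻¹ •
          (ContinuousLinearMap.adjoint (fderiv ℝ f (w s))) (f (w s) - y)))) : ℝ)
        = -((n:ℝ))⁻¹ *
          ‖(ContinuousLinearMap.adjoint (fderiv ℝ f (w s))) (f (w s) - y)‖ ^ 2 := by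
      rw [map_neg, map_smul, inner_neg_right, real_inner_smul_right,
        ← ContinuousLinearMap.adjoint_inner_left, real_inner_self_eq_norm_sq]
      ring
    have heq : (fun u => (inner ℝ (f (w u) - y) (f (w u) - y) : ℝ))
        = fun u => ‖f (w u) - y‖ ^ 2 := by
      funext u; rw [real_inner_self_eq_norm_sq]
    have hval2 : (inner ℝ ((fderiv ℝ f (w s)) (-(((n:ℝ))⁻¹ •
          (ContinuousLinearMap.adjoint (fderiv ℝ f (w s))) (f (w s) - y)))) (f (w s) - y) : ℝ)
        = -((n:ℝ))⁻¹ *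
          ‖(ContinuousLinearMap.adjoint (fderiv ℝ f (w s))) (f (w s) - y)‖ ^ 2 := by
      rw [real_inner_comm]; exact hval
    rw [heq] at h1
    refine h1.congr_deriv ?_
    rw [hval, hval2]
    ring
  -- h u = exp(K u) * g u is antitone on [0, T]
  have hh : ∀ s : ℝ, HasDerivAt (fun u => Real.exp (K * u) * ‖f (w u) - y‖ ^ 2)
      (Real.exp (K * s) * (K * ‖f (w s) - y‖ ^ 2 +
        (-(2 / n) *
          ‖(ContinuousLinearMap.adjoint (fderiv ℝ f (w s))) (f (w s) - y)‖ ^ 2))) s := by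
    intro s
    have he : HasDerivAt (fun u => Real.exp (K * u)) (Real.exp (K * s) * K) s := by
      have := (Real.hasDerivAt_exp (K * s)).comp s ((hasDerivAt_id s).const_mul K)
      simpa [Function.comp_def] using this
    refine (he.mul (hg s)).congr_deriv ?_
    ring
  have hanti : AntitoneOn (fun u => Real.exp (K * u) * ‖f (w u) - y‖ ^ 2)
      (Set.Icc 0 T) := by
    apply antitoneOn_of_deriv_nonpos (convex_Icc 0 T)
    · exact (Differentiable.continuous (fun x => (hh x).differentiableAt)).continuousOn
    · intro x hx
      exact ((hh x).differentiableAt).differentiableWithinAt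
    · intro x hx
      rw [interior_Icc] at hx
      rw [(hh x).deriv]
      have hx' : x ∈ Set.Icc (0:ℝ) T := Set.mem_Icc_of_Ioo hx
      have h2 := hNTK x hx'
      have : K * ‖f (w x) - y‖ ^ 2 +
          (-(2 / n) *
            ‖(ContinuousLinearMap.adjoint (fderiv ℝ f (w x))) (f (w x) - y)‖ ^ 2) ≤ 0 := by
        have : K * ‖f (w x) - y‖ ^ 2 = (2 / n) * (lmin * ‖f (w x) - y‖ ^ 2) := by
          rw [hKdef]; ring
        nlinarith [h2, div_pos (by norm_num : (0:ℝ) < 2) hnR]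
      have hepos := Real.exp_pos (K * x)
      nlinarith
  intro t ht
  have := hanti (Set.left_mem_Icc.mpr hT) ht ht.1
  simp only [mul_zero, Real.exp_zero, one_mul] at this
  have hexp : (0:ℝ) < Real.exp (K * t) := Real.exp_pos _
  have hres : ‖f (w t) - y‖ ^ 2 ≤ Real.exp (-(K * t)) * ‖f (w 0) - y‖ ^ 2 := by
    rw [Real.exp_neg, inv_mul_eq_div, le_div_iff₀ hexp]
    linarith [this]
  simpa [neg_mul] using hres
end

section
/- Consider ridgeless kernel regression (λ = 0) trained by gradient flow from w_0 = 0 on L_S(w) = (1/(2n))‖φ(X)ᵀw − y‖², with kernel Gram matrix K(X,X) = φ(X)ᵀφ(X) assumed invertible and K(x_i,x_i) ≤ K_max for all i. Then the quantity Γ = (2/n)·sqrt(∫₀^T ‖∇_w L_S(w_t)‖² dt)·sqrt(Σᵢ ∫₀^T ‖∇_w ℓ(w_t,z_i)‖² dt) satisfies Γ ≤ (1/n)·sqrt(K_max)·sqrt(yᵀ K(X,X)^{−1} y)·‖y‖. -/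
open Matrix

/-- Γ-bound for ridgeless kernel regression trained by gradient flow from `w₀ = 0`:
with `L_S(w) = (1/(2n))‖φ(X)ᵀw − y‖²`, Gram matrix `K = φ(X)ᵀφ(X)` invertible and
`K(xᵢ,xᵢ) ≤ K_max`, the quantity
`Γ = (2/n)·√(∫₀ᵀ‖∇L_S(w_t)‖²dt)·√(Σᵢ∫₀ᵀ‖∇ℓ(w_t,zᵢ)‖²dt)` satisfies
`Γ ≤ (1/n)·√K_max·√(yᵀK⁻¹y)·‖y‖`. Here `‖∇L_S(w)‖² = Σⱼ((1/n)φ(X)(φ(X)ᵀw−y))ⱼ²`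
and `‖∇ℓ(w,zᵢ)‖² = ((φ(X)ᵀw−y)ᵢ)²·Kᵢᵢ`. -/
theorem stmt_18 (p n : ℕ) (hn : 0 < n) (φX : Matrix (Fin p) (Fin n) ℝ)
    (y : Fin n → ℝ) (K : Matrix (Fin n) (Fin n) ℝ) (hK : K = φXᵀ * φX)
    (hKinv : IsUnit K.det) (Kmax : ℝ) (hKmax : ∀ i, K i i ≤ Kmax)
    (w : ℝ → Fin p → ℝ) (hw0 : w 0 = 0)
    (hflow : ∀ t : ℝ, HasDerivAt w
      (-((1 / (n : ℝ)) • φX.mulVec (φXᵀ.mulVec (w t) - y))) t)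
    (T : ℝ) (hT : 0 ≤ T)
    (Γ : ℝ)
    (hΓ : Γ = (2 / (n : ℝ)) *
      Real.sqrt (∫ t in (0:ℝ)..T,
        ∑ j : Fin p, ((1 / (n : ℝ)) * φX.mulVec (φXᵀ.mulVec (w t) - y) j) ^ 2) *
      Real.sqrt (∫ t in (0:ℝ)..T,
        ∑ i : Fin n, (φXᵀ.mulVec (w t) - y) i ^ 2 * K i i)) :
    Γ ≤ (1 / (n : ℝ)) * Real.sqrt Kmax *
      Real.sqrt (y ⬝ᵥ K⁻¹.mulVec y) * Real.sqrt (∑ i, y i ^ 2) := by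
  have hn' : (0:ℝ) < n := by exact_mod_cast hn
  have hKsymm : Kᵀ = K := by rw [hK, transpose_mul, transpose_transpose]
  -- residual notation
  set r : ℝ → Fin n → ℝ := fun t => φXᵀ.mulVec (w t) - y with hr
  -- derivative of residual components
  have hrc : ∀ t i, HasDerivAt (fun s => r s i)
      (-(1/(n:ℝ)) * K.mulVec (r t) i) t := by
    intro t i
    have hwk : ∀ k, HasDerivAt (fun s => w s k)
        ((-((1 / (n : ℝ)) • φX.mulVec (r t))) k) t :=
      fun k => hasDerivAt_pi.mp (hflow t) k
    have h1 : HasDerivAt (fun s => (∑ k, φXᵀ i k * w s k) - y i)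
        (∑ k, φXᵀ i k * ((-((1 / (n : ℝ)) • φX.mulVec (r t))) k)) t :=
      (HasDerivAt.fun_sum fun k _ => (hwk k).const_mul _).sub_const (y i)
    convert h1 using 1
    case e'_8 => rfl
    simp only [hr, Matrix.mulVec, dotProduct, hK, Matrix.mul_apply, Pi.neg_apply,
      Pi.smul_apply, smul_eq_mul, Finset.sum_mul, Finset.mul_sum, mul_neg, neg_mul,
      ← Finset.sum_neg_distrib]
    rw [Finset.sum_comm]
    exact Finset.sum_congr rfl fun k _ => Finset.sum_congr rfl fun j _ => by ring
  -- continuity of residual components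
  have hrcont : ∀ i, Continuous fun t => r t i := by
    intro i
    rw [continuous_iff_continuousAt]
    exact fun t => (hrc t i).continuousAt
  -- PSD of K and K⁻¹
  have hKKinv : K * K⁻¹ = 1 := Matrix.mul_nonsing_inv _ hKinv
  have hKinvK : K⁻¹ * K = 1 := Matrix.nonsing_inv_mul _ hKinv
  have hpsd : ∀ v : Fin n → ℝ, 0 ≤ v ⬝ᵥ K⁻¹.mulVec v := by
    intro v
    have hv : K.mulVec (K⁻¹.mulVec v) = v := by
      rw [mulVec_mulVec, hKKinv, one_mulVec]
    set u := K⁻¹.mulVec v with hu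
    have : v ⬝ᵥ u = (φX.mulVec u) ⬝ᵥ (φX.mulVec u) := by
      rw [← hv, hK, ← mulVec_mulVec, dotProduct_comm, dotProduct_mulVec, vecMul_transpose]
    rw [this]
    exact Finset.sum_nonneg fun i _ => mul_self_nonneg _
  have hKmax0 : 0 ≤ Kmax := by
    refine le_trans ?_ (hKmax ⟨0, hn⟩)
    rw [hK, Matrix.mul_apply]
    exact Finset.sum_nonneg fun k _ => by
      simp only [transpose_apply]; exact mul_self_nonneg _
  -- key identity :  ∑ (φX v)_j ² = v ⬝ K v
  have key1 : ∀ v : Fin n → ℝ, ∑ j, (φX.mulVec v j)^2 = v ⬝ᵥ K.mulVec v := by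
    intro v
    have : v ⬝ᵥ K.mulVec v = (φX.mulVec v) ⬝ᵥ (φX.mulVec v) := by
      rw [hK, ← mulVec_mulVec, dotProduct_mulVec, vecMul_transpose]
    rw [this]
    simp [dotProduct, sq]
  -- key identity : (K a) ⬝ K⁻¹ a = a ⬝ a  and  a ⬝ K⁻¹ (K a) = a ⬝ a
  have key2 : ∀ a : Fin n → ℝ, (K.mulVec a) ⬝ᵥ (K⁻¹.mulVec a) = a ⬝ᵥ a := by
    intro a
    rw [dotProduct_comm, dotProduct_mulVec, ← mulVec_transpose, hKsymm, mulVec_mulVec,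
      hKKinv, one_mulVec]
  have key3 : ∀ a : Fin n → ℝ, a ⬝ᵥ (K⁻¹.mulVec (K.mulVec a)) = a ⬝ᵥ a := by
    intro a
    rw [mulVec_mulVec, hKinvK, one_mulVec]
  -- double sum to dot product
  have dsum : ∀ (u v : Fin n → ℝ) (M : Matrix (Fin n) (Fin n) ℝ),
      ∑ i, ∑ j, u i * M i j * v j = u ⬝ᵥ M.mulVec v := by
    intro u v M
    simp [dotProduct, Matrix.mulVec, Finset.mul_sum, mul_assoc]
  -- residual at 0
  have hr0 : ∀ i, r 0 i = -(y i) := by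
    intro i; simp [hr, hw0, Matrix.mulVec]
  ----------------------------------------------------------------
  -- FIRST integral:  ∫ I1 ≤ (1/(2n)) ∑ y²
  ----------------------------------------------------------------
  set I1 : ℝ → ℝ := fun t => ∑ j : Fin p, ((1 / (n : ℝ)) * φX.mulVec (r t) j) ^ 2 with hI1
  set F : ℝ → ℝ := fun t => (1/(2*(n:ℝ))) * ∑ i, (r t i)^2 with hF
  have hFderiv : ∀ t, HasDerivAt F (-(I1 t)) t := by
    intro t
    have h1 : HasDerivAt (fun s => ∑ i, (r s i)^2)
        (∑ i, (2:ℝ) * (r t i)^1 * (-(1/(n:ℝ)) * K.mulVec (r t) i)) t := by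
      refine HasDerivAt.fun_sum fun i _ => ?_
      have := (hrc t i).fun_pow 2
      simpa using this
    have h2 := h1.const_mul (1/(2*(n:ℝ)))
    convert h2 using 1
    case e'_4 => rfl
    case e'_5 => rfl
    have e1 : I1 t = (1/(n:ℝ))^2 * ((r t) ⬝ᵥ K.mulVec (r t)) := by
      rw [hI1]
      simp only [mul_pow, ← Finset.mul_sum]
      rw [key1]
    have e2 : ∑ i, (2:ℝ) * (r t i)^1 * (-(1/(n:ℝ)) * K.mulVec (r t) i)
        = (-(2/(n:ℝ))) * ((r t) ⬝ᵥ K.mulVec (r t)) := by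
      rw [dotProduct, Finset.mul_sum]
      exact Finset.sum_congr rfl fun i _ => by ring
    rw [e1, e2]
    field_simp
  have hmvcont : ∀ j, Continuous fun t => φX.mulVec (r t) j := by
    intro j
    simp only [Matrix.mulVec, dotProduct]
    exact continuous_finset_sum _ fun i _ => continuous_const.mul (hrcont i)
  have hI1cont : Continuous I1 :=
    continuous_finset_sum _ fun j _ => (continuous_const.mul (hmvcont j)).pow 2
  have hFTC1 : (∫ t in (0:ℝ)..T, -(I1 t)) = F T - F 0 :=
    intervalIntegral.integral_eq_sub_of_hasDerivAt (fun t _ => hFderiv t)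
      (hI1cont.neg.intervalIntegrable _ _)
  have hInt1 : (∫ t in (0:ℝ)..T, I1 t) = F 0 - F T := by
    rw [intervalIntegral.integral_neg] at hFTC1; linarith
  have hFT : 0 ≤ F T :=
    mul_nonneg (by positivity) (Finset.sum_nonneg fun i _ => sq_nonneg _)
  have hF0 : F 0 = (1/(2*(n:ℝ))) * ∑ i, (y i)^2 := by
    rw [hF]
    exact congrArg _ (Finset.sum_congr rfl fun i _ => by rw [hr0]; ring)
  have hA : (∫ t in (0:ℝ)..T, I1 t) ≤ (1/(2*(n:ℝ))) * ∑ i, (y i)^2 := by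
    rw [hInt1, ← hF0]; linarith
  ----------------------------------------------------------------
  -- SECOND integral
  ----------------------------------------------------------------
  set q : ℝ := y ⬝ᵥ K⁻¹.mulVec y with hq
  set I0 : ℝ → ℝ := fun t => ∑ i, (r t i)^2 with hI0
  set I2 : ℝ → ℝ := fun t => ∑ i, (r t i)^2 * K i i with hI2
  set G : ℝ → ℝ := fun t => ((n:ℝ)/2) * ∑ i, ∑ j, r t i * K⁻¹ i j * r t j with hG
  have hGderiv : ∀ t, HasDerivAt G (-(I0 t)) t := by
    intro t
    have h1 : HasDerivAt (fun s => ∑ i, ∑ j, r s i * K⁻¹ i j * r s j)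
        (∑ i, ∑ j, ((-(1/(n:ℝ)) * K.mulVec (r t) i * K⁻¹ i j) * r t j
          + (r t i * K⁻¹ i j) * (-(1/(n:ℝ)) * K.mulVec (r t) j))) t := by
      refine HasDerivAt.fun_sum fun i _ => HasDerivAt.fun_sum fun j _ => ?_
      exact ((hrc t i).mul_const (K⁻¹ i j)).mul (hrc t j)
    have h2 := h1.const_mul ((n:ℝ)/2)
    convert h2 using 1
    case e'_4 => rfl
    case e'_5 => rfl
    have e2 : ∑ i, ∑ j, ((-(1/(n:ℝ)) * K.mulVec (r t) i * K⁻¹ i j) * r t j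
          + (r t i * K⁻¹ i j) * (-(1/(n:ℝ)) * K.mulVec (r t) j))
        = (-(1/(n:ℝ))) * (((K.mulVec (r t)) ⬝ᵥ K⁻¹.mulVec (r t))
            + ((r t) ⬝ᵥ K⁻¹.mulVec (K.mulVec (r t)))) := by
      rw [← dsum, ← dsum, mul_add]
      rw [Finset.mul_sum, Finset.mul_sum, ← Finset.sum_add_distrib]
      refine Finset.sum_congr rfl fun i _ => ?_
      rw [Finset.mul_sum, Finset.mul_sum, ← Finset.sum_add_distrib]
      exact Finset.sum_congr rfl fun j _ => by ring
    rw [e2, key2, key3]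
    have e3 : (r t) ⬝ᵥ (r t) = I0 t := by simp [hI0, dotProduct, sq]
    rw [← e3]
    field_simp
    ring
  have hI0cont : Continuous I0 := continuous_finset_sum _ fun i _ => (hrcont i).pow 2
  have hI2cont : Continuous I2 :=
    continuous_finset_sum _ fun i _ => ((hrcont i).pow 2).mul continuous_const
  have hFTC2 : (∫ t in (0:ℝ)..T, -(I0 t)) = G T - G 0 :=
    intervalIntegral.integral_eq_sub_of_hasDerivAt (fun t _ => hGderiv t)
      (hI0cont.neg.intervalIntegrable _ _)
  have hInt0 : (∫ t in (0:ℝ)..T, I0 t) = G 0 - G T := by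
    rw [intervalIntegral.integral_neg] at hFTC2; linarith
  have hGT : 0 ≤ G T := by
    simp only [hG]
    rw [dsum]
    exact mul_nonneg (by positivity) (hpsd _)
  have hG0 : G 0 = ((n:ℝ)/2) * q := by
    simp only [hG, hq]
    congr 1
    rw [← dsum y y K⁻¹]
    refine Finset.sum_congr rfl fun i _ => Finset.sum_congr rfl fun j _ => by
      rw [hr0, hr0]; ring
  have hInt0le : (∫ t in (0:ℝ)..T, I0 t) ≤ ((n:ℝ)/2) * q := by
    rw [hInt0, ← hG0]; linarith
  have hB : (∫ t in (0:ℝ)..T, I2 t) ≤ Kmax * (((n:ℝ)/2) * q) := by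
    have hptw : ∀ t ∈ Set.Icc (0:ℝ) T, I2 t ≤ Kmax * I0 t := by
      intro t _
      simp only [hI2, hI0]
      rw [Finset.mul_sum]
      exact Finset.sum_le_sum fun i _ => by
        rw [mul_comm Kmax]
        exact mul_le_mul_of_nonneg_left (hKmax i) (sq_nonneg _)
    have hmono := intervalIntegral.integral_mono_on (μ := MeasureTheory.volume) hT
      (hI2cont.intervalIntegrable 0 T) ((continuous_const.mul hI0cont).intervalIntegrable 0 T)
      hptw
    simp only [Pi.mul_apply, intervalIntegral.integral_const_mul] at hmono
    exact le_trans hmono (mul_le_mul_of_nonneg_left hInt0le hKmax0)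
  ----------------------------------------------------------------
  -- combine
  ----------------------------------------------------------------
  have hq0 : 0 ≤ q := hpsd y
  set Y : ℝ := ∑ i, (y i)^2 with hY
  have hY0 : 0 ≤ Y := Finset.sum_nonneg fun i _ => sq_nonneg _
  have hΓ' : Γ = (2 / (n : ℝ)) * Real.sqrt (∫ t in (0:ℝ)..T, I1 t)
      * Real.sqrt (∫ t in (0:ℝ)..T, I2 t) := hΓ
  rw [hΓ']
  have h1 : Real.sqrt (∫ t in (0:ℝ)..T, I1 t) ≤ Real.sqrt ((1/(2*(n:ℝ))) * Y) :=
    Real.sqrt_le_sqrt hA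
  have h2 : Real.sqrt (∫ t in (0:ℝ)..T, I2 t) ≤ Real.sqrt (Kmax * (((n:ℝ)/2) * q)) :=
    Real.sqrt_le_sqrt hB
  calc (2 / (n : ℝ)) * Real.sqrt (∫ t in (0:ℝ)..T, I1 t) * Real.sqrt (∫ t in (0:ℝ)..T, I2 t)
      ≤ (2 / (n : ℝ)) * Real.sqrt ((1/(2*(n:ℝ))) * Y) * Real.sqrt (Kmax * (((n:ℝ)/2) * q)) := by
        refine mul_le_mul (mul_le_mul_of_nonneg_left h1 (by positivity)) h2
          (Real.sqrt_nonneg _) (by positivity)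
    _ = (1 / (n : ℝ)) * Real.sqrt Kmax * Real.sqrt q * Real.sqrt Y := by
        rw [Real.sqrt_mul (by positivity : (0:ℝ) ≤ 1/(2*(n:ℝ))),
          Real.sqrt_mul hKmax0, Real.sqrt_mul (by positivity : (0:ℝ) ≤ (n:ℝ)/2)]
        have key : Real.sqrt (1/(2*(n:ℝ))) * Real.sqrt ((n:ℝ)/2) = 1/2 := by
          rw [← Real.sqrt_mul (by positivity)]
          have : (1/(2*(n:ℝ))) * ((n:ℝ)/2) = (1/2)^2 := by field_simp
          rw [this, Real.sqrt_sq (by norm_num)]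
        linear_combination (2/(n:ℝ) * Real.sqrt Y * Real.sqrt Kmax * Real.sqrt q) * key
end
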